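/- A Hermitian matrix M is positive semidefinite if and only if every principal submatrix of M has nonnegative determinant. -/

import Mathlib

open Matrix Finset

lemma det_piecewise_rows {n : ℕ} (M : Matrix (Fin n) (Fin n) ℂ) (t : ℂ) (s : Finset (Fin n)) :
    Matrix.det (s.piecewise M (t • (1 : Matrix (Fin n) (Fin n) ℂ))) =
      t ^ (n - s.card) *
        (M.submatrix (fun i : s => (i : Fin n)) (fun j : s => (j : Fin n))).det := by
  classical
  set X : Matrix (Fin n) (Fin n) ℂ := s.piecewise M (t • (1 : Matrix (Fin n) (Fin n) ℂ)) with hX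
  have h1 : X.det = (X.submatrix (Equiv.sumCompl (· ∈ s)) (Equiv.sumCompl (· ∈ s))).det :=
    (Matrix.det_submatrix_equiv_self _ X).symm
  have h2 : X.submatrix (Equiv.sumCompl (· ∈ s)) (Equiv.sumCompl (· ∈ s)) =
      Matrix.fromBlocks
        (M.submatrix (fun i : s => (i : Fin n)) (fun j : s => (j : Fin n)))
        (Matrix.of fun (i : s) (j : {x // ¬ x ∈ s}) => M i j)
        0 (t • (1 : Matrix {x // ¬ x ∈ s} {x // ¬ x ∈ s} ℂ)) := by
    ext i j
    cases i with
    | inl i =>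
      cases j with
      | inl j => simp [X, Matrix.submatrix, Finset.piecewise, i.2, Finset.piecewise_eq_of_mem _ _ _ i.2]
      | inr j => simp [X, Matrix.submatrix, Finset.piecewise, i.2, Finset.piecewise_eq_of_mem _ _ _ i.2]
    | inr i =>
      cases j with
      | inl j =>
        have hne : (i : Fin n) ≠ (j : Fin n) := fun h => i.2 (h ▸ j.2)
        simp [X, Matrix.submatrix, Finset.piecewise, i.2, Finset.piecewise_eq_of_notMem _ _ _ i.2, Matrix.one_apply, hne]
      | inr j =>
        simp [X, Matrix.submatrix, Finset.piecewise, i.2, Finset.piecewise_eq_of_notMem _ _ _ i.2, Matrix.one_apply,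
          Subtype.ext_iff]
  rw [h1, h2, Matrix.det_fromBlocks_zero₂₁, Matrix.det_smul, Matrix.det_one, mul_one]
  have hc : Fintype.card {x // ¬ x ∈ s} = n - s.card := by
    simp [Fintype.card_subtype_compl]
  rw [hc, mul_comm]

lemma det_add_smul_one_expand {n : ℕ} (M : Matrix (Fin n) (Fin n) ℂ) (t : ℂ) :
    Matrix.det (M + t • (1 : Matrix (Fin n) (Fin n) ℂ)) =
      ∑ s : Finset (Fin n), t ^ (n - s.card) *
        (M.submatrix (fun i : s => (i : Fin n)) (fun j : s => (j : Fin n))).det := by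
  classical
  have h := (Matrix.detRowAlternating :
      (Fin n → ℂ) [⋀^Fin n]→ₗ[ℂ] ℂ).toMultilinearMap.map_add_univ
      M (t • (1 : Matrix (Fin n) (Fin n) ℂ))
  calc Matrix.det (M + t • (1 : Matrix (Fin n) (Fin n) ℂ))
      = ∑ s : Finset (Fin n),
        Matrix.det (s.piecewise M (t • (1 : Matrix (Fin n) (Fin n) ℂ))) := h
    _ = _ := by
        exact Finset.sum_congr rfl fun s _ => det_piecewise_rows M t s

open ComplexOrder in
lemma psd_det_nonneg {m : Type*} [Fintype m] [DecidableEq m] {A : Matrix m m ℂ}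
    (hA : A.PosSemidef) : 0 ≤ A.det := by
  rw [hA.1.det_eq_prod_eigenvalues]
  refine Finset.prod_nonneg fun i _ => ?_
  exact Complex.zero_le_real.mpr (hA.eigenvalues_nonneg i)

open ComplexOrder in
theorem stmt_9 {n : ℕ} (M : Matrix (Fin n) (Fin n) ℂ) (hM : M.IsHermitian) :
    M.PosSemidef ↔
      ∀ S : Finset (Fin n),
        0 ≤ (M.submatrix (fun i : S => (i : Fin n)) (fun j : S => (j : Fin n))).det := by
  constructor
  · intro h S
    exact psd_det_nonneg (h.submatrix _)
  · intro h
    refine hM.posSemidef_iff_eigenvalues_nonneg.mpr fun j => ?_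
    by_contra hneg
    push_neg at hneg
    set t : ℝ := -hM.eigenvalues j with ht
    have ht0 : 0 < t := by rw [Pi.zero_apply] at hneg; linarith
    -- det (M + t • 1) > 0
    have hdet : 0 < Matrix.det (M + (t : ℂ) • (1 : Matrix (Fin n) (Fin n) ℂ)) := by
      rw [det_add_smul_one_expand]
      refine Finset.sum_pos' (fun s _ => mul_nonneg ?_ (h s)) ⟨∅, Finset.mem_univ _, ?_⟩
      · have : (0:ℝ) ≤ t ^ (n - s.card) := pow_nonneg ht0.le _
        exact_mod_cast this
      · have h1 : (0:ℝ) < t ^ (n - (∅ : Finset (Fin n)).card) := pow_pos ht0 _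
        have h2 : ((M.submatrix (fun i : (∅ : Finset (Fin n)) => (i : Fin n))
            (fun j : (∅ : Finset (Fin n)) => (j : Fin n))).det) = 1 :=
          Matrix.det_isEmpty
        rw [h2, mul_one]
        exact_mod_cast h1
    -- but M + t•1 kills the eigenvector
    have hv := hM.mulVec_eigenvectorBasis j
    set v : Fin n → ℂ := ⇑(hM.eigenvectorBasis j : EuclideanSpace ℂ (Fin n)) with hvdef
    have hvne : v ≠ 0 := by
      have := hM.eigenvectorBasis.orthonormal.ne_zero j
      intro hzero
      apply this
      ext i
      exact congrFun hzero i
    have hv' : M *ᵥ v = hM.eigenvalues j • v := hv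
    have hkill : (M + (t : ℂ) • (1 : Matrix (Fin n) (Fin n) ℂ)) *ᵥ v = 0 := by
      rw [Matrix.add_mulVec, Matrix.smul_mulVec, Matrix.one_mulVec, hv']
      ext i
      simp [ht, Complex.real_smul]
    have : Matrix.det (M + (t : ℂ) • (1 : Matrix (Fin n) (Fin n) ℂ)) = 0 := by
      rw [← Matrix.exists_mulVec_eq_zero_iff]
      exact ⟨v, hvne, hkill⟩
    rw [this] at hdet
    exact lt_irrefl _ hdet
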